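/- Let D be a λ⁺-excellent filter on I and suppose A_α ⊆ I for α < λ. Then there exist B_α ⊆ A_α with B_α = A_α mod D such that for any finite set α₀,…,α_{n−1} < λ, if A_{α₀} ∩ ⋯ ∩ A_{α_{n−1}} = ∅ mod D then B_{α₀} ∩ ⋯ ∩ B_{α_{n−1}} = ∅. -/
import Mathlib


open scoped Classical

universe u v w

/-- Terms in the language of Boolean algebras, with variables from `V`. -/
inductive BTerm (V : Type v) : Type v where
  | var : V → BTerm V
  | bot : BTerm V
  | top : BTerm V
  | inf : BTerm V → BTerm V → BTerm V
  | sup : BTerm V → BTerm V → BTerm V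
  | compl : BTerm V → BTerm V

/-- Evaluation of a Boolean term in a Boolean algebra, given values for the variables. -/
def BTerm.eval {V : Type v} {B : Type u} [BooleanAlgebra B] (f : V → B) : BTerm V → B
  | .var v => f v
  | .bot => ⊥
  | .top => ⊤
  | .inf s t => s.eval f ⊓ t.eval f
  | .sup s t => s.eval f ⊔ t.eval f
  | .compl t => (t.eval f)ᶜ

/-- `σ ∈ Λ_{D, Ā↾u}`: the Boolean term `σ` vanishes modulo `D` on every sequence
obtained from `Ā↾𝒫(u)` by replacing the entries indexed by sets not contained in
some `w ⊆ u` by `∅`. -/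
def InLambda {ι : Type w} {I : Type u} (D : Filter I) (A : Finset ι → Set I)
    (u : Finset ι) (σ : BTerm {v : Finset ι // v ⊆ u}) : Prop :=
  ∀ w : Finset ι, w ⊆ u →
    (BTerm.eval (fun v => if v.1 ⊆ w then A v.1 else (∅ : Set I)) σ)ᶜ ∈ D

/-- `λ⁺`-excellence of a filter `D` on `I`. -/
def IsExcellent {I : Type u} (lam : Cardinal.{w}) (D : Filter I) : Prop :=
  ∀ A : Finset lam.out → Set I, ∃ B : Finset lam.out → Set I,
    (∀ u, B u ⊆ A u) ∧
    (∀ u, {t | t ∈ A u ↔ t ∈ B u} ∈ D) ∧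
    ∀ (u : Finset lam.out) (σ : BTerm {v : Finset lam.out // v ⊆ u}),
      InLambda D A u σ → BTerm.eval (fun v => B v.1) σ = ∅


theorem mem_eval_bigInf {V : Type v} {I : Type u} {f : V → Set I} {l : List V} {x : I} :
    x ∈ BTerm.eval f (l.foldr (fun v t => .inf (.var v) t) .top) ↔ ∀ v ∈ l, x ∈ f v := by
  induction l with
  | nil => simp [BTerm.eval]
  | cons v l ih => simp [BTerm.eval, ih]

/-- Let `D` be a `λ⁺`-excellent filter on `I` and `A_α ⊆ I` for `α < λ`.  Then there
are `B_α ⊆ A_α` with `B_α = A_α mod D` such that for every finite set of indices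
`s ⊆ λ`, if `⋂_{α ∈ s} A_α = ∅ mod D` then `⋂_{α ∈ s} B_α = ∅`. -/
theorem excellent_finite_intersections {I : Type u} (lam : Cardinal.{w})
    (D : Filter I) (h : IsExcellent lam D) (A : lam.out → Set I) :
    ∃ B : lam.out → Set I,
      (∀ α, B α ⊆ A α) ∧
      (∀ α, {t | t ∈ A α ↔ t ∈ B α} ∈ D) ∧
      ∀ s : Finset lam.out, (⋂ α ∈ s, A α)ᶜ ∈ D → (⋂ α ∈ s, B α) = ∅ := by
  set A' : Finset lam.out → Set I := fun u => ⋂ α ∈ u, A α with hA'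
  obtain ⟨B', hB1, hB2, hB3⟩ := h A'
  have hA'single : ∀ α, A' {α} = A α := by
    intro α; simp [hA']
  refine ⟨fun α => B' {α}, ?_, ?_, ?_⟩
  · intro α
    have := hB1 {α}
    rwa [hA'single] at this
  · intro α
    have := hB2 {α}
    rwa [hA'single] at this
  · intro s hs
    -- the term: big inf of the variables {α}, α ∈ s
    set l : List {v : Finset lam.out // v ⊆ s} :=
      s.attach.toList.map (fun a => ⟨{a.1}, Finset.singleton_subset_iff.mpr a.2⟩) with hl
    set σ : BTerm {v : Finset lam.out // v ⊆ s} :=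
      l.foldr (fun v t => .inf (.var v) t) .top with hσ
    have key := hB3 s σ
    have hInLambda : InLambda D A' s σ := by
      intro w hw
      by_cases hws : s ⊆ w
      · -- w = s essentially; eval equals ⋂ α ∈ s, A α
        apply Filter.mem_of_superset hs
        intro x hx
        simp only [Set.mem_compl_iff] at hx ⊢
        intro hxe
        apply hx
        simp only [Set.mem_iInter]
        intro α hα
        have hmem : x ∈ (if ({α} : Finset lam.out) ⊆ w then A' {α} else (∅ : Set I)) := by
          have : (⟨{α}, Finset.singleton_subset_iff.mpr hα⟩ :
              {v : Finset lam.out // v ⊆ s}) ∈ l := by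
            exact List.mem_map.mpr ⟨⟨α, hα⟩, by simp, rfl⟩
          exact mem_eval_bigInf.mp hxe _ this
        rw [if_pos (Finset.singleton_subset_iff.mpr (hws hα))] at hmem
        rw [hA'single] at hmem
        exact hmem
      · -- some α ∈ s with α ∉ w: the corresponding factor is ∅
        obtain ⟨α, hαs, hαw⟩ := Finset.not_subset.mp hws
        have : BTerm.eval (fun v => if v.1 ⊆ w then A' v.1 else (∅ : Set I)) σ = ∅ := by
          ext x
          simp only [Set.mem_empty_iff_false, iff_false]
          intro hxe
          have hmem : x ∈ (if ({α} : Finset lam.out) ⊆ w then A' {α} else (∅ : Set I)) := by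
            have : (⟨{α}, Finset.singleton_subset_iff.mpr hαs⟩ :
                {v : Finset lam.out // v ⊆ s}) ∈ l := by
              exact List.mem_map.mpr ⟨⟨α, hαs⟩, by simp, rfl⟩
            exact mem_eval_bigInf.mp hxe _ this
          rw [if_neg (by simpa [Finset.singleton_subset_iff] using hαw)] at hmem
          exact hmem
        rw [this]
        simp
    have hempty := key hInLambda
    ext x
    simp only [Set.mem_empty_iff_false, iff_false, Set.mem_iInter]
    intro hx
    have : x ∈ BTerm.eval (fun v => B' v.1) σ := by
      apply mem_eval_bigInf.mpr
      intro v hv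
      simp only [hl, List.mem_map, Finset.mem_toList, Finset.mem_attach] at hv
      obtain ⟨a, -, rfl⟩ := hv
      exact hx a.1 a.2
    rw [hempty] at this
    exact this
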